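/- Let L(u,y) = ∑_{l=1}^{q} y_l·log(∑_{j=1}^{q} exp(u_j − u_l)) be the pick-all-labels loss on ℝ^q × S(k), where S(k) is the set of k-sparse binary vectors in {0,1}^q. Then L is (2√k, 1/2)-self-bounding Lipschitz with respect to the sup-norm: for all u, v ∈ ℝ^q and y ∈ S(k), |L(u,y) − L(v,y)| ≤ 2√k·max{L(u,y), L(v,y)}^{1/2}·‖u − v‖_∞. -/

import Mathlib

private lemma one_sub_exp_neg_le_sqrt {t : ℝ} (ht : 0 ≤ t) :
    1 - Real.exp (-t) ≤ Real.sqrt t := by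
  have h1 : -t + 1 ≤ Real.exp (-t) := Real.add_one_le_exp (-t)
  have h2 : Real.exp (-t) ≤ 1 := Real.exp_le_one_iff.mpr (by linarith)
  have h3 : 0 ≤ 1 - Real.exp (-t) := by linarith
  have hx1 : 1 - Real.exp (-t) ≤ 1 := by linarith [Real.exp_pos (-t)]
  have hxt : 1 - Real.exp (-t) ≤ t := by linarith
  rw [show (1 - Real.exp (-t) ≤ Real.sqrt t) ↔ _ from Real.le_sqrt h3 ht]
  nlinarith [mul_le_mul hx1 hxt h3 zero_le_one]

/-- Key analytic lemma: if `1 ≤ A`, `0 ≤ c` and `1 + e^{-c}(A-1) ≤ B`, then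
`log A - log B ≤ c * √(log A)`. -/
private lemma key_log {A B c : ℝ} (hA : 1 ≤ A) (hc : 0 ≤ c)
    (hB : 1 + Real.exp (-c) * (A - 1) ≤ B) :
    Real.log A - Real.log B ≤ c * Real.sqrt (Real.log A) := by
  have hA0 : 0 < A := by linarith
  have hexc : 0 < Real.exp (-c) := Real.exp_pos _
  have hB1 : 1 ≤ B := by nlinarith
  have hB0 : 0 < B := by linarith
  set lam : ℝ := 1 / A with hlam
  have hlam0 : 0 ≤ lam := by positivity
  have hlam1 : lam ≤ 1 := by
    rw [hlam, div_le_one hA0]; exact hA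
  -- 1 + e^{-c}(A-1) = A * (lam + (1-lam) e^{-c})
  have hfac : 1 + Real.exp (-c) * (A - 1) = A * (lam + (1 - lam) * Real.exp (-c)) := by
    field_simp [hlam]
    have hAl : A * A⁻¹ = 1 := mul_inv_cancel₀ hA0.ne'
    linear_combination (Real.exp (-c) - 1) * hAl
  -- convexity of exp
  have hconv := convexOn_exp.2 (Set.mem_univ (0 : ℝ)) (Set.mem_univ (-c)) hlam0
    (by linarith : (0:ℝ) ≤ 1 - lam) (by ring)
  simp only [smul_eq_mul, mul_zero, zero_add, Real.exp_zero, mul_one] at hconv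
  -- so A * exp(-(1-lam)*c) ≤ B
  have hle : A * Real.exp ((1 - lam) * -c) ≤ B := by
    calc A * Real.exp ((1 - lam) * -c) ≤ A * (lam + (1 - lam) * Real.exp (-c)) := by
          apply mul_le_mul_of_nonneg_left hconv (le_of_lt hA0)
      _ = 1 + Real.exp (-c) * (A - 1) := hfac.symm
      _ ≤ B := hB
  have hlogB : Real.log A + (1 - lam) * -c ≤ Real.log B := by
    have := Real.log_le_log (by positivity) hle
    rwa [Real.log_mul (ne_of_gt hA0) (ne_of_gt (Real.exp_pos _)),
      Real.log_exp] at this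
  have hlA : 0 ≤ Real.log A := Real.log_nonneg hA
  have hlamA : lam = Real.exp (-Real.log A) := by
    rw [Real.exp_neg, Real.exp_log hA0, hlam, one_div]
  have hkey : 1 - lam ≤ Real.sqrt (Real.log A) := by
    rw [hlamA]; exact one_sub_exp_neg_le_sqrt hlA
  have hsq : 0 ≤ Real.sqrt (Real.log A) := Real.sqrt_nonneg _
  nlinarith [hlogB]

/-- One-sided bound. -/
private lemma step {q k : ℕ} (u v y : Fin q → ℝ)
    (hy01 : ∀ j, y j = 0 ∨ y j = 1) (hysparse : ∑ j, y j ≤ (k : ℝ)) :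
    (∑ l, y l * Real.log (∑ j, Real.exp (u j - u l))) -
      (∑ l, y l * Real.log (∑ j, Real.exp (v j - v l))) ≤
    2 * Real.sqrt k *
      Real.sqrt (∑ l, y l * Real.log (∑ j, Real.exp (u j - u l))) * ‖u - v‖ := by
  classical
  set d : ℝ := ‖u - v‖ with hd
  have hd0 : 0 ≤ d := norm_nonneg _
  have hy0 : ∀ j, 0 ≤ y j := fun j => by rcases hy01 j with h | h <;> simp [h]
  set A : Fin q → ℝ := fun l => ∑ j, Real.exp (u j - u l) with hA
  set B : Fin q → ℝ := fun l => ∑ j, Real.exp (v j - v l) with hB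
  have hA1 : ∀ l, 1 ≤ A l := by
    intro l
    have := Finset.single_le_sum (f := fun j => Real.exp (u j - u l))
      (fun j _ => (Real.exp_pos _).le) (Finset.mem_univ l)
    simpa [hA] using this
  have ha0 : ∀ l, 0 ≤ Real.log (A l) := fun l => Real.log_nonneg (hA1 l)
  -- bound on coordinate differences
  have hcoord : ∀ j l : Fin q, u j - u l - 2 * d ≤ v j - v l := by
    intro j l
    have h1 : |u j - v j| ≤ d := by
      have := norm_le_pi_norm (u - v) j
      simpa [Real.norm_eq_abs] using this
    have h2 : |u l - v l| ≤ d := by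
      have := norm_le_pi_norm (u - v) l
      simpa [Real.norm_eq_abs] using this
    rw [abs_le] at h1 h2
    linarith [h1.1, h1.2, h2.1, h2.2]
  -- B l ≥ 1 + e^{-2d}(A l - 1)
  have hBbd : ∀ l, 1 + Real.exp (-(2 * d)) * (A l - 1) ≤ B l := by
    intro l
    have hAsplit : A l = 1 + ∑ j ∈ Finset.univ.erase l, Real.exp (u j - u l) := by
      simp only [hA]
      rw [← Finset.add_sum_erase Finset.univ (fun j => Real.exp (u j - u l))
        (Finset.mem_univ l)]
      simp
    have hBsplit : B l = 1 + ∑ j ∈ Finset.univ.erase l, Real.exp (v j - v l) := by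
      simp only [hB]
      rw [← Finset.add_sum_erase Finset.univ (fun j => Real.exp (v j - v l))
        (Finset.mem_univ l)]
      simp
    rw [hAsplit, hBsplit]
    have : ∑ j ∈ Finset.univ.erase l, Real.exp (-(2*d)) * Real.exp (u j - u l) ≤
        ∑ j ∈ Finset.univ.erase l, Real.exp (v j - v l) := by
      apply Finset.sum_le_sum
      intro j _
      rw [← Real.exp_add]
      exact Real.exp_le_exp.mpr (by linarith [hcoord j l])
    rw [← Finset.mul_sum] at this
    linarith
  -- per-term bound
  have hterm : ∀ l, Real.log (A l) - Real.log (B l) ≤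
      2 * d * Real.sqrt (Real.log (A l)) := fun l =>
    key_log (hA1 l) (by linarith) (hBbd l)
  -- Cauchy-Schwarz
  set S : ℝ := ∑ l, y l * Real.sqrt (Real.log (A l)) with hS
  set Lu : ℝ := ∑ l, y l * Real.log (A l) with hLu
  have hLu0 : 0 ≤ Lu := Finset.sum_nonneg fun l _ => mul_nonneg (hy0 l) (ha0 l)
  have hCS : S ^ 2 ≤ (∑ l, y l) * Lu := by
    have h := Finset.sum_mul_sq_le_sq_mul_sq Finset.univ
      (fun l => Real.sqrt (y l)) (fun l => Real.sqrt (y l * Real.log (A l)))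
    have e1 : ∀ l : Fin q, Real.sqrt (y l) * Real.sqrt (y l * Real.log (A l)) =
        y l * Real.sqrt (Real.log (A l)) := by
      intro l
      rw [Real.sqrt_mul (hy0 l), ← mul_assoc, Real.mul_self_sqrt (hy0 l)]
    have e2 : ∀ l : Fin q, Real.sqrt (y l) ^ 2 = y l := fun l => Real.sq_sqrt (hy0 l)
    have e3 : ∀ l : Fin q, Real.sqrt (y l * Real.log (A l)) ^ 2 = y l * Real.log (A l) :=
      fun l => Real.sq_sqrt (mul_nonneg (hy0 l) (ha0 l))
    simp only [e1, e2, e3] at h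
    exact h
  have hS0 : 0 ≤ S := Finset.sum_nonneg fun l _ =>
    mul_nonneg (hy0 l) (Real.sqrt_nonneg _)
  have hSle : S ≤ Real.sqrt k * Real.sqrt Lu := by
    have hk0 : (0:ℝ) ≤ (k:ℝ) := Nat.cast_nonneg _
    have h1 : S ^ 2 ≤ (k : ℝ) * Lu := by
      have hsum0 : 0 ≤ ∑ l, y l := Finset.sum_nonneg fun l _ => hy0 l
      nlinarith
    have h2 : S ≤ Real.sqrt ((k : ℝ) * Lu) := by
      rw [show (S ≤ Real.sqrt ((k:ℝ) * Lu)) ↔ _ from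
        Real.le_sqrt hS0 (mul_nonneg hk0 hLu0)]
      exact h1
    rwa [Real.sqrt_mul hk0] at h2
  -- assemble
  have hsum : (∑ l, y l * Real.log (A l)) - (∑ l, y l * Real.log (B l)) ≤ 2 * d * S := by
    rw [← Finset.sum_sub_distrib, hS, Finset.mul_sum]
    apply Finset.sum_le_sum
    intro l _
    rw [← mul_sub]
    calc y l * (Real.log (A l) - Real.log (B l)) ≤
        y l * (2 * d * Real.sqrt (Real.log (A l))) :=
          mul_le_mul_of_nonneg_left (hterm l) (hy0 l)
      _ = 2 * d * (y l * Real.sqrt (Real.log (A l))) := by ring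
  calc (∑ l, y l * Real.log (A l)) - (∑ l, y l * Real.log (B l)) ≤ 2 * d * S := hsum
    _ ≤ 2 * d * (Real.sqrt k * Real.sqrt Lu) := by
        apply mul_le_mul_of_nonneg_left hSle (by linarith)
    _ = 2 * Real.sqrt k * Real.sqrt Lu * d := by ring

theorem pick_all_labels_self_bounding_lipschitz
    (q k : ℕ) (hq : 0 < q) (hk : 0 < k) (hkq : k ≤ q)
    (L : (Fin q → ℝ) → (Fin q → ℝ) → ℝ)
    (hL : ∀ u y, L u y = ∑ l, y l * Real.log (∑ j, Real.exp (u j - u l)))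
    (u v : Fin q → ℝ) (y : Fin q → ℝ)
    (hy01 : ∀ j, y j = 0 ∨ y j = 1) (hysparse : ∑ j, y j ≤ (k : ℝ)) :
    |L u y - L v y| ≤
      2 * Real.sqrt k * max (L u y) (L v y) ^ ((1 : ℝ) / 2) * ‖u - v‖ := by
  have hy0 : ∀ j, 0 ≤ y j := fun j => by rcases hy01 j with h | h <;> simp [h]
  have hnn : ∀ w : Fin q → ℝ, 0 ≤ L w y := by
    intro w
    rw [hL]
    apply Finset.sum_nonneg
    intro l _
    apply mul_nonneg (hy0 l)
    apply Real.log_nonneg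
    have := Finset.single_le_sum (f := fun j => Real.exp (w j - w l))
      (fun j _ => (Real.exp_pos _).le) (Finset.mem_univ l)
    simpa using this
  have hmax0 : 0 ≤ max (L u y) (L v y) := le_trans (hnn u) (le_max_left _ _)
  have hrpow : max (L u y) (L v y) ^ ((1:ℝ)/2) = Real.sqrt (max (L u y) (L v y)) :=
    (Real.sqrt_eq_rpow _).symm
  rw [hrpow]
  have h1 : L u y - L v y ≤
      2 * Real.sqrt k * Real.sqrt (max (L u y) (L v y)) * ‖u - v‖ := by
    calc L u y - L v y ≤ 2 * Real.sqrt k * Real.sqrt (L u y) * ‖u - v‖ := by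
          rw [hL u y, hL v y]; exact step u v y hy01 hysparse
      _ ≤ 2 * Real.sqrt k * Real.sqrt (max (L u y) (L v y)) * ‖u - v‖ := by
          apply mul_le_mul_of_nonneg_right _ (norm_nonneg _)
          apply mul_le_mul_of_nonneg_left _ (by positivity)
          exact Real.sqrt_le_sqrt (le_max_left _ _)
  have h2 : L v y - L u y ≤
      2 * Real.sqrt k * Real.sqrt (max (L u y) (L v y)) * ‖u - v‖ := by
    have hvu : ‖v - u‖ = ‖u - v‖ := by rw [← neg_sub, norm_neg]
    calc L v y - L u y ≤ 2 * Real.sqrt k * Real.sqrt (L v y) * ‖v - u‖ := by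
          rw [hL u y, hL v y]; exact step v u y hy01 hysparse
      _ ≤ 2 * Real.sqrt k * Real.sqrt (max (L u y) (L v y)) * ‖u - v‖ := by
          rw [hvu]
          apply mul_le_mul_of_nonneg_right _ (norm_nonneg _)
          apply mul_le_mul_of_nonneg_left _ (by positivity)
          exact Real.sqrt_le_sqrt (le_max_right _ _)
  rw [abs_sub_le_iff]
  exact ⟨h1, h2⟩
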